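/- The bidimensional Lead or Delay map Δ satisfies: (i) Δ is a right action of the monoid (A*×A*)×(A*×A*) on H_A×H_A; (ii) the stabilizer of ((ε,ε),(ε,ε)) under Δ is the set {((v,w),(v,w)) : v,w ∈ A*}; (iii) semi-injectivity: if Δ(X,((f',g'),(f'',g''))) = Δ(Y,((f',g'),(f'',g''))) and neither coordinate of this common value is 𝟎, then X = Y. -/

import Mathlib

/-- Words over the alphabet `A`, i.e. elements of the free monoid `A*`. -/
abbrev Word (A : Type) := List A

/-- The set `H_A = (A* × {ε}) ∪ ({ε} × A*) ∪ {𝟎}`, encoded inside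
`Option (A* × A*)`, where `none` is the absorbing element `𝟎` and
`some (h_l, h_r)` is the pair `(h_l, h_r)`. -/
abbrev LD (A : Type) := Option (Word A × Word A)

/-- `h` belongs to `H_A`: it is `𝟎` or one of its two components is the empty word. -/
def LD.inHA {A : Type} (h : LD A) : Prop := ∀ p ∈ h, p.1 = [] ∨ p.2 = []

open Classical in
/-- The lead-or-delay map `δ : H_A × (A* × A*) → H_A`. -/
noncomputable def ldAct {A : Type} (h : LD A) (p : Word A × Word A) : LD A :=
  match h with
  | none => none
  | some (hl, hr) =>
      if (hr ++ p.2) <+: (hl ++ p.1) then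
        some ((hl ++ p.1).drop (hr ++ p.2).length, ([] : Word A))
      else if (hl ++ p.1) <+: (hr ++ p.2) then
        some (([] : Word A), (hr ++ p.2).drop (hl ++ p.1).length)
      else none

/-- The bidimensional lead-or-delay map
`Δ((h',h''),((f',g'),(f'',g''))) = (δ(h',(f',f'')), δ(h'',(g',g'')))`. -/
noncomputable def lddAct {A : Type} (h : LD A × LD A)
    (p : (Word A × Word A) × (Word A × Word A)) : LD A × LD A :=
  (ldAct h.1 (p.1.1, p.2.1), ldAct h.2 (p.1.2, p.2.2))

open Classical in
noncomputable def comb {A : Type} (L R : Word A) : LD A :=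
  if R <+: L then some (L.drop R.length, ([] : Word A))
  else if L <+: R then some (([] : Word A), R.drop L.length)
  else none

variable {A : Type}

lemma ldAct_some_eq_comb (hl hr f g : Word A) :
    ldAct (some (hl, hr)) (f, g) = comb (hl ++ f) (hr ++ g) := rfl

lemma comb_cancel (c x y : Word A) : comb (c ++ x) (c ++ y) = comb x y := by
  unfold comb
  by_cases h1 : y <+: x
  · rw [if_pos h1, if_pos ((List.prefix_append_right_inj c).mpr h1)]
    congr 2
    rw [List.length_append, List.drop_length_add_append]
  · rw [if_neg (fun hc => h1 ((List.prefix_append_right_inj c).mp hc)), if_neg h1]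
    by_cases h2 : x <+: y
    · rw [if_pos h2, if_pos ((List.prefix_append_right_inj c).mpr h2)]
      have hd : (c ++ y).drop (c ++ x).length = y.drop x.length := by
        rw [List.length_append, List.drop_length_add_append]
      rw [hd]
    · rw [if_neg (fun hc => h2 ((List.prefix_append_right_inj c).mp hc)), if_neg h2]

lemma ldAct_nil (h : LD A) (hH : LD.inHA h) : ldAct h ([], []) = h := by
  match h with
  | none => rfl
  | some (hl, hr) =>
    rcases hH (hl, hr) rfl with h1 | h1 <;> subst h1 <;> simp [ldAct]

lemma ldAct_comp (h : LD A) (f g f₁ g₁ : Word A) :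
    ldAct (ldAct h (f, g)) (f₁, g₁) = ldAct h (f ++ f₁, g ++ g₁) := by
  match h with
  | none => rfl
  | some (hl, hr) =>
    rw [ldAct_some_eq_comb, ldAct_some_eq_comb, ← List.append_assoc, ← List.append_assoc]
    generalize hl ++ f = L
    generalize hr ++ g = R
    by_cases h1 : R <+: L
    · obtain ⟨t, ht⟩ := h1
      subst ht
      have hc : comb (R ++ t) R = some (t, ([] : Word A)) := by
        unfold comb
        rw [if_pos (List.prefix_append R t), List.drop_left]
      rw [hc, ldAct_some_eq_comb, List.append_assoc R t f₁,
        show R ++ g₁ = R ++ ([] ++ g₁) by simp, comb_cancel]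
    · by_cases h2 : L <+: R
      · obtain ⟨t, ht⟩ := h2
        subst ht
        have hc : comb L (L ++ t) = some (([] : Word A), t) := by
          unfold comb
          rw [if_neg h1, if_pos (List.prefix_append L t), List.drop_left]
        rw [hc, ldAct_some_eq_comb, List.append_assoc L t g₁,
          show L ++ f₁ = L ++ ([] ++ f₁) by simp, comb_cancel]
      · have c1 : ¬ (R ++ g₁) <+: (L ++ f₁) := fun hc => by
          have p1 : R <+: L ++ f₁ := ((R.prefix_append g₁).trans hc)
          have p2 : L <+: L ++ f₁ := L.prefix_append f₁
          rcases List.prefix_or_prefix_of_prefix p1 p2 with h | h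
          · exact h1 h
          · exact h2 h
        have c2 : ¬ (L ++ f₁) <+: (R ++ g₁) := fun hc => by
          have p1 : L <+: R ++ g₁ := ((L.prefix_append f₁).trans hc)
          have p2 : R <+: R ++ g₁ := R.prefix_append g₁
          rcases List.prefix_or_prefix_of_prefix p1 p2 with h | h
          · exact h2 h
          · exact h1 h
        rw [show comb L R = none from by unfold comb; rw [if_neg h1, if_neg h2]]
        show (none : LD A) = comb (L ++ f₁) (R ++ g₁)
        unfold comb
        rw [if_neg c1, if_neg c2]

lemma ldAct_eq_some (hl hr f g rl rr : Word A)
    (h : ldAct (some (hl, hr)) (f, g) = some (rl, rr)) :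
    hl ++ (f ++ rr) = hr ++ (g ++ rl) := by
  rw [ldAct_some_eq_comb] at h
  unfold comb at h
  split_ifs at h with h1 h2
  · simp only [Option.some.injEq, Prod.mk.injEq] at h
    obtain ⟨e1, e2⟩ := h
    have ht := List.prefix_iff_eq_append.mp h1
    rw [← e1, ← e2]
    simp only [List.append_nil, ← List.append_assoc]
    exact ht.symm
  · simp only [Option.some.injEq, Prod.mk.injEq] at h
    obtain ⟨e1, e2⟩ := h
    have ht := List.prefix_iff_eq_append.mp h2
    rw [← e1, ← e2]
    simp only [List.append_nil, ← List.append_assoc]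
    exact ht

lemma pair_eq (hl hr hl' hr' s t : Word A) (h1 : hl = [] ∨ hr = [])
    (h2 : hl' = [] ∨ hr' = []) (e1 : hl ++ s = hr ++ t) (e2 : hl' ++ s = hr' ++ t) :
    hl = hl' ∧ hr = hr' := by
  rcases h1 with h1 | h1 <;> rcases h2 with h2 | h2 <;> subst h1 <;> subst h2 <;>
    simp only [List.nil_append, List.append_nil] at e1 e2
  · exact ⟨rfl, List.append_cancel_right (e1.symm.trans e2)⟩
  · -- e1 : s = hr ++ t, e2 : hl' ++ s = t
    rw [← e2] at e1
    have hlen := congrArg List.length e1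
    simp only [List.length_append] at hlen
    have h3 : hr = [] := List.eq_nil_of_length_eq_zero (by omega)
    have h4 : hl' = [] := List.eq_nil_of_length_eq_zero (by omega)
    exact ⟨h4.symm, h3⟩
  · -- e1 : hl ++ s = t, e2 : s = hr' ++ t
    rw [← e1] at e2
    have hlen := congrArg List.length e2
    simp only [List.length_append] at hlen
    have h3 : hl = [] := List.eq_nil_of_length_eq_zero (by omega)
    have h4 : hr' = [] := List.eq_nil_of_length_eq_zero (by omega)
    exact ⟨h3, h4.symm⟩
  · exact ⟨List.append_cancel_right (e1.trans e2.symm), rfl⟩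

lemma ldAct_semiinj (h h' : LD A) (hH : LD.inHA h) (hH' : LD.inHA h') (f g : Word A)
    (heq : ldAct h (f, g) = ldAct h' (f, g)) (hne : ldAct h (f, g) ≠ none) : h = h' := by
  match h, h' with
  | none, _ => exact absurd rfl hne
  | some (hl, hr), none => rw [heq] at hne; exact absurd rfl hne
  | some (hl, hr), some (hl', hr') =>
    obtain ⟨⟨rl, rr⟩, hr0⟩ := Option.ne_none_iff_exists'.mp hne
    have E1 := ldAct_eq_some hl hr f g rl rr hr0
    have E2 := ldAct_eq_some hl' hr' f g rl rr (heq.symm.trans hr0)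
    obtain ⟨a, b⟩ := pair_eq hl hr hl' hr' (f ++ rr) (g ++ rl)
      (hH _ rfl) (hH' _ rfl) E1 E2
    rw [a, b]

lemma ldAct_nilnil_eq (a b : Word A) :
    ldAct (some ([], [])) (a, b) = some (([] : Word A), ([] : Word A)) ↔ a = b := by
  rw [ldAct_some_eq_comb]
  simp only [List.nil_append]
  unfold comb
  constructor
  · intro h
    split_ifs at h with h1 h2
    · simp only [Option.some.injEq, Prod.mk.injEq] at h
      have hle := List.drop_eq_nil_iff.mp h.1
      exact (h1.eq_of_length (le_antisymm h1.length_le hle)).symm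
    · simp only [Option.some.injEq, Prod.mk.injEq] at h
      have hle := List.drop_eq_nil_iff.mp h.2
      exact h2.eq_of_length (le_antisymm h2.length_le hle)
  · intro h; subst h; simp

/-- the bidimensional lead-or-delay map `Δ` is a right action of
`(A* × A*) × (A* × A*)` on `H_A × H_A`; the stabilizer of `((ε,ε),(ε,ε))` is
`{((v,w),(v,w)) : v,w ∈ A*}`; and `Δ` is semi-injective. -/
theorem ldd_is_action_stabilizer_semi_injective {A : Type} :
    -- (i) right action
    (∀ h : LD A × LD A, LD.inHA h.1 → LD.inHA h.2 →
      lddAct h ((([] : Word A), ([] : Word A)), (([] : Word A), ([] : Word A))) = h ∧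
      ∀ f' g' f'' g'' f₁' g₁' f₁'' g₁'' : Word A,
        lddAct (lddAct h ((f', g'), (f'', g''))) ((f₁', g₁'), (f₁'', g₁'')) =
          lddAct h ((f' ++ f₁', g' ++ g₁'), (f'' ++ f₁'', g'' ++ g₁''))) ∧
    -- (ii) stabilizer of ((ε,ε),(ε,ε))
    ({p : (Word A × Word A) × (Word A × Word A) |
        lddAct (some ([], []), some ([], [])) p =
          (some (([], []) : Word A × Word A), some (([], []) : Word A × Word A))} =
      {p : (Word A × Word A) × (Word A × Word A) | ∃ v w : Word A, p = ((v, w), (v, w))}) ∧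
    -- (iii) semi-injectivity
    (∀ X Y : LD A × LD A, LD.inHA X.1 → LD.inHA X.2 → LD.inHA Y.1 → LD.inHA Y.2 →
      ∀ p : (Word A × Word A) × (Word A × Word A),
        lddAct X p = lddAct Y p → (lddAct X p).1 ≠ none → (lddAct X p).2 ≠ none →
        X = Y) := by
  refine ⟨?_, ?_, ?_⟩
  · intro h h1 h2
    refine ⟨?_, ?_⟩
    · show (ldAct h.1 ([], []), ldAct h.2 ([], [])) = h
      rw [ldAct_nil h.1 h1, ldAct_nil h.2 h2]
    · intro f' g' f'' g'' f₁' g₁' f₁'' g₁''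
      show (ldAct (ldAct h.1 (f', f'')) (f₁', f₁''), ldAct (ldAct h.2 (g', g'')) (g₁', g₁'')) = _
      rw [ldAct_comp, ldAct_comp]
      rfl
  · ext ⟨⟨f', g'⟩, ⟨f'', g''⟩⟩
    simp only [Set.mem_setOf_eq]
    constructor
    · intro h
      have h1 : ldAct (some ([], [])) (f', f'') = some (([] : Word A), ([] : Word A)) :=
        congrArg Prod.fst h
      have h2 : ldAct (some ([], [])) (g', g'') = some (([] : Word A), ([] : Word A)) :=
        congrArg Prod.snd h
      refine ⟨f', g', ?_⟩
      rw [(ldAct_nilnil_eq f' f'').mp h1, (ldAct_nilnil_eq g' g'').mp h2]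
    · rintro ⟨v, w, hp⟩
      rw [hp]
      show (ldAct (some ([], [])) (v, v), ldAct (some ([], [])) (w, w)) = _
      rw [(ldAct_nilnil_eq v v).mpr rfl, (ldAct_nilnil_eq w w).mpr rfl]
  · intro X Y hx1 hx2 hy1 hy2 p heq hn1 hn2
    have e1 : ldAct X.1 (p.1.1, p.2.1) = ldAct Y.1 (p.1.1, p.2.1) := congrArg Prod.fst heq
    have e2 : ldAct X.2 (p.1.2, p.2.2) = ldAct Y.2 (p.1.2, p.2.2) := congrArg Prod.snd heq
    have := ldAct_semiinj X.1 Y.1 hx1 hy1 p.1.1 p.2.1 e1 hn1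
    have := ldAct_semiinj X.2 Y.2 hx2 hy2 p.1.2 p.2.2 e2 hn2
    exact Prod.ext ‹X.1 = Y.1› ‹X.2 = Y.2›
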